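/- Let w ∈ (0,1/2), let M_w be the 3×3 real matrix [[1,0,2w],[0,2w,0],[2w,0,2w]], and let V be the 3×3 real matrix [[1,0,1/3],[0,1/3,0],[1/3,0,1/5]]. Then for any sequences (aₖ), (bₖ), (cₖ) of positive reals with aₖ → 0, bₖ → ∞ and cₖ → 0, one has tr( (M_w + diag(aₖ,bₖ,cₖ))⁻¹ V ) → (10w+3)/(30·w·(1−2w)). -/

import Mathlib

/-- Quadratic regression, Case 4 limit: a → 0, b → ∞, c → 0 gives
tr((M_w + diag(a,b,c))⁻¹ V) → (10w+3)/(30w(1-2w)). -/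
theorem stmt_10 (w : ℝ) (hw : w ∈ Set.Ioo (0:ℝ) (1/2))
    (a b c : ℕ → ℝ) (ha0 : ∀ k, 0 < a k) (hb0 : ∀ k, 0 < b k) (hc0 : ∀ k, 0 < c k)
    (ha : Filter.Tendsto a Filter.atTop (nhds 0))
    (hb : Filter.Tendsto b Filter.atTop Filter.atTop)
    (hc : Filter.Tendsto c Filter.atTop (nhds 0)) :
    Filter.Tendsto
      (fun k =>
        ((((!![1, 0, 2*w; 0, 2*w, 0; 2*w, 0, 2*w] : Matrix (Fin 3) (Fin 3) ℝ) +
            Matrix.diagonal ![a k, b k, c k])⁻¹) *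
          (!![1, 0, 1/3; 0, 1/3, 0; 1/3, 0, 1/5] : Matrix (Fin 3) (Fin 3) ℝ)).trace)
      Filter.atTop (nhds ((10*w + 3) / (30 * w * (1 - 2*w)))) := by
  obtain ⟨hw0, hw1⟩ := hw
  -- key positivity facts
  have hD : ∀ k, (0:ℝ) < (1 + a k) * (2*w + c k) - 4*w^2 := by
    intro k
    have h1 : (2:ℝ)*w < (1 + a k) * (2*w + c k) := by nlinarith [ha0 k, hc0 k]
    nlinarith
  have hB : ∀ k, (0:ℝ) < 2*w + b k := fun k => by nlinarith [hb0 k]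
  -- rewrite the trace as an explicit rational function
  have key : ∀ k,
      ((((!![1, 0, 2*w; 0, 2*w, 0; 2*w, 0, 2*w] : Matrix (Fin 3) (Fin 3) ℝ) +
            Matrix.diagonal ![a k, b k, c k])⁻¹) *
          (!![1, 0, 1/3; 0, 1/3, 0; 1/3, 0, 1/5] : Matrix (Fin 3) (Fin 3) ℝ)).trace
      = ((2*w + c k) - 4*w/3 + (1 + a k)/5) / ((1 + a k) * (2*w + c k) - 4*w^2)
        + 1 / (3 * (2*w + b k)) := by
    intro k
    set D : ℝ := (1 + a k) * (2*w + c k) - 4*w^2 with hDdef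
    have hDne : D ≠ 0 := ne_of_gt (hD k)
    have hBne : 2*w + b k ≠ 0 := ne_of_gt (hB k)
    have hinv : ((!![1, 0, 2*w; 0, 2*w, 0; 2*w, 0, 2*w] : Matrix (Fin 3) (Fin 3) ℝ) +
            Matrix.diagonal ![a k, b k, c k])⁻¹
        = !![(2*w + c k)/D, 0, -(2*w)/D; 0, 1/(2*w + b k), 0;
             -(2*w)/D, 0, (1 + a k)/D] := by
      have hdiag : (Matrix.diagonal ![a k, b k, c k] : Matrix (Fin 3) (Fin 3) ℝ)
          = !![a k, 0, 0; 0, b k, 0; 0, 0, c k] := by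
        ext i j
        fin_cases i <;> fin_cases j <;>
          simp [Matrix.diagonal_apply, Matrix.vecHead, Matrix.vecTail]
      rw [hdiag]
      apply Matrix.inv_eq_right_inv
      ext i j
      fin_cases i <;> fin_cases j <;>
        simp [Matrix.mul_apply, Fin.sum_univ_three, Matrix.one_apply] <;>
        (try field_simp) <;> (try ring)
    rw [hinv]
    simp only [Matrix.trace_fin_three, Matrix.mul_apply, Fin.sum_univ_three,
      Matrix.cons_val', Matrix.cons_val_zero, Matrix.cons_val_one, Matrix.head_cons,
      Matrix.empty_val', Matrix.cons_val_fin_one, Matrix.head_fin_const,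
      Matrix.cons_val_two, Matrix.tail_cons, Matrix.of_apply]
    field_simp
    ring
  simp only [key]
  have h1 : Filter.Tendsto
      (fun k => ((2*w + c k) - 4*w/3 + (1 + a k)/5) / ((1 + a k) * (2*w + c k) - 4*w^2))
      Filter.atTop (nhds ((10*w + 3) / (30 * w * (1 - 2*w)))) := by
    have hnum : Filter.Tendsto (fun k => (2*w + c k) - 4*w/3 + (1 + a k)/5)
        Filter.atTop (nhds ((2*w + 0) - 4*w/3 + (1 + 0)/5)) := by
      exact (((tendsto_const_nhds.add hc).sub tendsto_const_nhds).add
        ((tendsto_const_nhds.add ha).div_const 5))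
    have hden : Filter.Tendsto (fun k => (1 + a k) * (2*w + c k) - 4*w^2)
        Filter.atTop (nhds ((1 + 0) * (2*w + 0) - 4*w^2)) := by
      exact ((tendsto_const_nhds.add ha).mul (tendsto_const_nhds.add hc)).sub
        tendsto_const_nhds
    have hdne : (1 + (0:ℝ)) * (2*w + 0) - 4*w^2 ≠ 0 := by nlinarith
    have := hnum.div hden hdne
    convert this using 2
    · rfl
    have h12 : (1:ℝ) - 2*w ≠ 0 := by linarith
    have hw0' : w ≠ 0 := ne_of_gt hw0
    rw [div_eq_div_iff (by positivity) hdne]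
    ring
  have h2 : Filter.Tendsto (fun k => 1 / (3 * (2*w + b k))) Filter.atTop (nhds 0) := by
    have : Filter.Tendsto (fun k => 3 * (2*w + b k)) Filter.atTop Filter.atTop := by
      exact (Filter.tendsto_atTop_add_const_left _ _ hb).const_mul_atTop (by norm_num)
    have h := this.inv_tendsto_atTop
    have heq : (fun k => 3 * (2*w + b k))⁻¹ = fun k => 1 / (3 * (2*w + b k)) := by
      funext k; simp
    rwa [heq] at h
  have := h1.add h2
  simpa using this
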